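/- Let α1 ≥ α2 > 0 and let η satisfy 0 < η ≤ min{(α1/100)^{64}, (α2/100)^{64}}. There exists n0 = n0(α1, α2, η) such that for every integer n > n0 the following holds: let G be a complete graph whose edges are coloured with three colours (red, blue, green), containing pairwise disjoint vertex sets X1, X2, Y1, Y2 with |X1|, |Y1| ≥ (α1 − 11η^{1/64})n and |X2|, |Y2| ≥ ((1/2)α2 − 6η^{1/64})n, such that the blue bipartite graphs G2[X1, X2] and G2[Y1, Y2] are each 4η^{1/64}n-almost-complete. If there exist distinct vertices x1, x2 ∈ X1 and distinct vertices y1, y2 ∈ Y1 such that the edges x1y1 and x2y2 are both coloured blue, then G contains a blue cycle on exactly ⟨⟨α2 n⟩⟩ vertices. -/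

import Mathlib

open SimpleGraph

/-- The largest even integer not greater than `x`. -/
noncomputable def evenFloor (x : ℝ) : ℤ := 2 * ⌊x / 2⌋

/-- The largest odd integer not greater than `x`. -/
noncomputable def oddFloor (x : ℝ) : ℤ := 2 * ⌊(x - 1) / 2⌋ + 1

/-- `G` contains a cycle on exactly `m` vertices. -/
def HasCycleLen {V : Type*} (G : SimpleGraph V) (m : ℕ) : Prop :=
  ∃ (v : V) (w : G.Walk v v), w.IsCycle ∧ w.length = m

/-- The colour-`i` subgraph of the complete graph on `V` whose edges are coloured by `χ`. -/
def colourGraph {V : Type*} (χ : Sym2 V → Fin 3) (i : Fin 3) : SimpleGraph V where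
  Adj u v := u ≠ v ∧ χ s(u, v) = i
  symm := ⟨by
    intro u v h
    refine ⟨h.1.symm, ?_⟩
    rw [Sym2.eq_swap]
    exact h.2⟩
  loopless := ⟨fun u h => h.1 rfl⟩

/-- Every 3-colouring of the edges of the complete graph on `N` vertices yields, for some
`i ∈ {1,2,3}`, a cycle on `mᵢ` vertices all of whose edges have colour `i`. -/
def CycleRamseyProp (m₁ m₂ m₃ N : ℕ) : Prop :=
  ∀ χ : Sym2 (Fin N) → Fin 3,
    HasCycleLen (colourGraph χ 0) m₁ ∨ HasCycleLen (colourGraph χ 1) m₂ ∨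
      HasCycleLen (colourGraph χ 2) m₃

/-- The degree of `v` in `G`. -/
noncomputable def ndeg {V : Type*} (G : SimpleGraph V) (v : V) : ℕ :=
  {u : V | G.Adj v u}.ncard

/-- The number of neighbours of `v` inside the set `S`. -/
noncomputable def degIn {V : Type*} (G : SimpleGraph V) (S : Finset V) (v : V) : ℕ :=
  {u : V | u ∈ S ∧ G.Adj v u}.ncard

/-- The number of ordered pairs `(a, b) ∈ A × B` with `a` adjacent to `b` in `G`. -/
noncomputable def pairCount {V : Type*} (G : SimpleGraph V) (A B : Finset V) : ℕ :=
  {p : V × V | p.1 ∈ A ∧ p.2 ∈ B ∧ G.Adj p.1 p.2}.ncard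

/-- The density `d(A,B)` of the pair `(A, B)` in `G`. -/
noncomputable def density {V : Type*} (G : SimpleGraph V) (A B : Finset V) : ℝ :=
  (pairCount G A B : ℝ) / ((A.card : ℝ) * (B.card : ℝ))

/-- The pair `(A, B)` is `(ε, G)`-regular. -/
def IsRegularPair {V : Type*} (G : SimpleGraph V) (ε : ℝ) (A B : Finset V) : Prop :=
  ∀ A' ⊆ A, ∀ B' ⊆ B, ε * (A.card : ℝ) ≤ (A'.card : ℝ) →
    ε * (B.card : ℝ) ≤ (B'.card : ℝ) →
    |density G A' B' - density G A B| < ε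

/-- The pair `(A, B)` is simultaneously `(ε, Gᵣ)`-regular for `r = 1, 2, 3`. -/
def SimRegular {V : Type*} (ε : ℝ) (G₁ G₂ G₃ : SimpleGraph V) (A B : Finset V) : Prop :=
  IsRegularPair G₁ ε A B ∧ IsRegularPair G₂ ε A B ∧ IsRegularPair G₃ ε A B

/-- `M` is a connected-matching in `G`: a collection of edges, pairwise vertex-disjoint,
all lying in the same connected component of `G`. -/
def IsConnMatching {V : Type*} (G : SimpleGraph V) (M : Finset (V × V)) : Prop :=
  (∀ e ∈ M, G.Adj e.1 e.2) ∧
  (∀ e ∈ M, ∀ f ∈ M, e ≠ f → e.1 ≠ f.1 ∧ e.1 ≠ f.2 ∧ e.2 ≠ f.1 ∧ e.2 ≠ f.2) ∧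
  (∀ e ∈ M, ∀ f ∈ M, G.Reachable e.1 f.1)

/-- `G` contains a connected-matching on at least `m` vertices. -/
def HasConnMatching {V : Type*} (G : SimpleGraph V) (m : ℝ) : Prop :=
  ∃ M : Finset (V × V), IsConnMatching G M ∧ m ≤ 2 * (M.card : ℝ)

/-- `G` contains an odd connected-matching on at least `m` vertices: a connected-matching
whose component also contains an odd cycle. -/
def HasOddConnMatching {V : Type*} (G : SimpleGraph V) (m : ℝ) : Prop :=
  ∃ M : Finset (V × V), IsConnMatching G M ∧ m ≤ 2 * (M.card : ℝ) ∧
    ∃ (v : V) (w : G.Walk v v), w.IsCycle ∧ Odd w.length ∧ ∀ e ∈ M, G.Reachable e.1 v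

/-- `(V₀, V₁, …, V_K)` (given as `P : Fin (K+1) → Finset V`, with `P 0` the exceptional class)
is an `(ε, G₁, G₂, G₃)`-regular partition. -/
def IsRegularPartition3 {V : Type*} [Fintype V] (ε : ℝ) (G₁ G₂ G₃ : SimpleGraph V)
    {K : ℕ} (P : Fin (K + 1) → Finset V) : Prop :=
  (∀ i j, i ≠ j → Disjoint (P i) (P j)) ∧
  (∀ v : V, ∃ i, v ∈ P i) ∧
  ((P 0).card : ℝ) ≤ ε * (Fintype.card V : ℝ) ∧
  (∀ i j : Fin (K + 1), i ≠ 0 → j ≠ 0 → (P i).card = (P j).card) ∧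
  (∀ i : Fin (K + 1), i ≠ 0 →
    (({j : Fin (K + 1) | j ≠ 0 ∧ j ≠ i ∧
        ¬ SimRegular ε G₁ G₂ G₃ (P i) (P j)}.ncard : ℝ) ≤ ε * K))

/-- The colour-`Gc` subgraph of the three-multicoloured `(ε, ξ, Π)`-reduced-graph of the
three-coloured graph with colour subgraphs `G₁, G₂, G₃` and regular partition `P`:
vertices are the non-exceptional classes `P 1, …, P K`; two of them are adjacent if the pair is
simultaneously `(ε, Gᵣ)`-regular for `r = 1,2,3` and receive colour `Gc` if moreover the
`Gc`-density of the pair is at least `ξ`. -/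
def reducedGraph {V : Type*} (ε ξ : ℝ) (G₁ G₂ G₃ : SimpleGraph V) {K : ℕ}
    (P : Fin (K + 1) → Finset V) (Gc : SimpleGraph V) : SimpleGraph (Fin K) where
  Adj a b := a ≠ b ∧
    (SimRegular ε G₁ G₂ G₃ (P a.succ) (P b.succ) ∧
      SimRegular ε G₁ G₂ G₃ (P b.succ) (P a.succ)) ∧
    (ξ ≤ density Gc (P a.succ) (P b.succ) ∧ ξ ≤ density Gc (P b.succ) (P a.succ))
  symm := ⟨by
    intro a b h
    exact ⟨h.1.symm, ⟨h.2.1.2, h.2.1.1⟩, ⟨h.2.2.2, h.2.2.1⟩⟩⟩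
  loopless := ⟨fun a h => h.1 rfl⟩

/-- The two-multicoloured graph induced on `X`, with colour subgraphs `Gγ₁` (colour `γ₁`)
and `Gγ₂` (colour `γ₂`), contains a two-multicoloured spanning subgraph belonging to the class
`H(x₁, x₂, c₁, c₂, γ₁, γ₂)`. -/
def ContainsClassH {V : Type*} [DecidableEq V] (Gγ₁ Gγ₂ : SimpleGraph V) (X : Finset V)
    (x₁ x₂ c₁ c₂ : ℝ) : Prop :=
  ∃ (H₁ H₂ : SimpleGraph V) (X₁ X₂ : Finset V),
    H₁ ≤ Gγ₁ ∧ H₂ ≤ Gγ₂ ∧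
    (∀ u v : V, (H₁ ⊔ H₂).Adj u v → u ∈ X ∧ v ∈ X) ∧
    Disjoint X₁ X₂ ∧ X₁ ∪ X₂ = X ∧
    x₁ ≤ (X₁.card : ℝ) ∧ x₂ ≤ (X₂.card : ℝ) ∧
    (∀ v ∈ X, ((X.card : ℝ) - 1) - c₁ ≤ (degIn (H₁ ⊔ H₂) X v : ℝ)) ∧
    (∀ v ∈ X₁, (1 - c₂) * ((X₁.card : ℝ) - 1) ≤ (degIn H₁ X₁ v : ℝ)) ∧
    (∀ v ∈ X₁, (degIn H₂ X₁ v : ℝ) ≤ c₂ * ((X₁.card : ℝ) - 1)) ∧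
    (∀ v ∈ X₁, (1 - c₂) * (X₂.card : ℝ) ≤ (degIn H₂ X₂ v : ℝ)) ∧
    (∀ v ∈ X₂, (1 - c₂) * (X₁.card : ℝ) ≤ (degIn H₂ X₁ v : ℝ)) ∧
    (∀ v ∈ X₁, (degIn H₁ X₂ v : ℝ) ≤ c₂ * (X₂.card : ℝ)) ∧
    (∀ v ∈ X₂, (degIn H₁ X₁ v : ℝ) ≤ c₂ * (X₁.card : ℝ))

/-- Membership of the structure `H((a − 2η^{1/32})k, (b/2 − 2η^{1/32})k, 3η⁴k, η^{1/32}, γ₁, γ₂)`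
on a vertex set `X`, where `Ga`, `Gb` are the colour-`γ₁` and colour-`γ₂` subgraphs. -/
def MemH1 {V : Type*} [DecidableEq V] (Ga Gb : SimpleGraph V) (a b η : ℝ) (k : ℕ)
    (X : Finset V) : Prop :=
  ContainsClassH Ga Gb X ((a - 2 * η ^ ((1 : ℝ) / 32)) * k)
    ((b / 2 - 2 * η ^ ((1 : ℝ) / 32)) * k) (3 * η ^ 4 * k) (η ^ ((1 : ℝ) / 32))

/-- The edge `uv` is coloured exclusively with the colour of `Ga` (and not the colours of
`Gb`, `Gc`). -/
def ExclColour {V : Type*} (Ga Gb Gc : SimpleGraph V) (u v : V) : Prop :=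
  Ga.Adj u v ∧ ¬ Gb.Adj u v ∧ ¬ Gc.Adj u v

/-- The three-multicoloured graph with colour subgraphs `G₁, G₂, G₃` (red, blue, green)
contains a subgraph from the class `K(x₁, x₂, x₃, c)`. -/
def ContainsClassK {V : Type*} [DecidableEq V] (G₁ G₂ G₃ : SimpleGraph V)
    (x₁ x₂ x₃ c : ℝ) : Prop :=
  ∃ (H : SimpleGraph V) (X₁ X₂ X₃ : Finset V),
    H ≤ G₁ ⊔ G₂ ⊔ G₃ ∧
    Disjoint X₁ X₂ ∧ Disjoint X₁ X₃ ∧ Disjoint X₂ X₃ ∧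
    x₁ ≤ (X₁.card : ℝ) ∧ x₂ ≤ (X₂.card : ℝ) ∧ x₃ ≤ (X₃.card : ℝ) ∧
    (∀ u v : V, H.Adj u v → u ∈ X₁ ∪ X₂ ∪ X₃ ∧ v ∈ X₁ ∪ X₂ ∪ X₃) ∧
    (∀ v ∈ X₁ ∪ X₂ ∪ X₃,
      (((X₁ ∪ X₂ ∪ X₃).card : ℝ) - 1) - c ≤ (degIn H (X₁ ∪ X₂ ∪ X₃) v : ℝ)) ∧
    (∀ u ∈ X₁, ∀ v ∈ X₃, H.Adj u v → ExclColour G₁ G₂ G₃ u v) ∧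
    (∀ u ∈ X₂, ∀ v ∈ X₃, H.Adj u v → ExclColour G₂ G₁ G₃ u v) ∧
    (∀ u ∈ X₃, ∀ v ∈ X₃, H.Adj u v → ExclColour G₃ G₁ G₂ u v)

/-- The three-multicoloured graph with colour subgraphs `G₁, G₂, G₃` (red, blue, green)
contains a subgraph from the class `K*(x₁, x₂, y₁, y₂, z, c)`. -/
def ContainsClassKstar {V : Type*} [DecidableEq V] (G₁ G₂ G₃ : SimpleGraph V)
    (x₁ x₂ y₁ y₂ z c : ℝ) : Prop :=
  ∃ (H : SimpleGraph V) (X₁ X₂ Y₁ Y₂ : Finset V),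
    H ≤ G₁ ⊔ G₂ ⊔ G₃ ∧
    Disjoint X₁ X₂ ∧ Disjoint X₁ Y₁ ∧ Disjoint X₁ Y₂ ∧
    Disjoint X₂ Y₁ ∧ Disjoint X₂ Y₂ ∧ Disjoint Y₁ Y₂ ∧
    x₁ ≤ (X₁.card : ℝ) ∧ x₂ ≤ (X₂.card : ℝ) ∧ y₁ ≤ (Y₁.card : ℝ) ∧ y₂ ≤ (Y₂.card : ℝ) ∧
    z ≤ (Y₁.card : ℝ) + (Y₂.card : ℝ) ∧
    (∀ u v : V, H.Adj u v → u ∈ X₁ ∪ X₂ ∪ Y₁ ∪ Y₂ ∧ v ∈ X₁ ∪ X₂ ∪ Y₁ ∪ Y₂) ∧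
    (∀ v ∈ X₁ ∪ X₂ ∪ Y₁ ∪ Y₂,
      (((X₁ ∪ X₂ ∪ Y₁ ∪ Y₂).card : ℝ) - 1) - c ≤ (degIn H (X₁ ∪ X₂ ∪ Y₁ ∪ Y₂) v : ℝ)) ∧
    (∀ u ∈ X₁, ∀ v ∈ Y₁, H.Adj u v → ExclColour G₁ G₂ G₃ u v) ∧
    (∀ u ∈ X₂, ∀ v ∈ Y₂, H.Adj u v → ExclColour G₁ G₂ G₃ u v) ∧
    (∀ u ∈ X₁, ∀ v ∈ Y₂, H.Adj u v → ExclColour G₂ G₁ G₃ u v) ∧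
    (∀ u ∈ X₂, ∀ v ∈ Y₁, H.Adj u v → ExclColour G₂ G₁ G₃ u v) ∧
    (∀ u ∈ X₁, ∀ v ∈ X₂, H.Adj u v → ExclColour G₃ G₁ G₂ u v) ∧
    (∀ u ∈ Y₁, ∀ v ∈ Y₂, H.Adj u v → ExclColour G₃ G₁ G₂ u v)

open Finset

lemma degIn_eq' {V : Type*} (G : SimpleGraph V) (S : Finset V) (v : V)
    [DecidablePred (G.Adj v)] :
    degIn G S v = (S.filter (fun u => G.Adj v u)).card := by
  rw [degIn, ← Set.ncard_coe_finset]
  congr 1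
  ext u
  simp

lemma path_lemma {V : Type} [DecidableEq V] (G : SimpleGraph V) [DecidableRel G.Adj]
    (A B : Finset V) (hAB : Disjoint A B) (D : ℝ) (hD : 0 ≤ D)
    (hA : ∀ v ∈ A, (B.card : ℝ) - D ≤ ((B.filter (fun u => G.Adj v u)).card : ℝ))
    (hB : ∀ v ∈ B, (A.card : ℝ) - D ≤ ((A.filter (fun u => G.Adj v u)).card : ℝ)) :
    ∀ k : ℕ, 1 ≤ k → ∀ (FA FB : Finset V) (a b : V), a ∈ A → b ∈ A → a ≠ b →
      a ∉ FA → b ∉ FA →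
      ((FB.card : ℝ) + k + 2 * D ≤ B.card) →
      ((FA.card : ℝ) + k + D + 2 ≤ A.card) →
      ∃ p : G.Walk a b, p.IsPath ∧ p.length = 2 * k ∧
        ∀ x ∈ p.support, (x ∈ A ∧ x ∉ FA) ∨ (x ∈ B ∧ x ∉ FB) := by
  intro k hk
  induction k, hk using Nat.le_induction with
  | base =>
    intro FA FB a b ha hb hab haFA hbFA hBcard hAcard
    set C := ((B.filter (fun u => G.Adj a u)) ∩ (B.filter (fun u => G.Adj b u))) \ FB with hC
    have h1 := hA a ha
    have h2 := hA b hb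
    have hsub : (B.filter (fun u => G.Adj a u)) ∪ (B.filter (fun u => G.Adj b u)) ⊆ B :=
      union_subset (filter_subset _ _) (filter_subset _ _)
    have hu : ((B.filter (fun u => G.Adj a u)) ∪ (B.filter (fun u => G.Adj b u))).card ≤ B.card :=
      card_le_card hsub
    have hie := card_inter_add_card_union (B.filter (fun u => G.Adj a u))
      (B.filter (fun u => G.Adj b u))
    have hsd := card_le_card_sdiff_add_card
      (s := (B.filter (fun u => G.Adj a u)) ∩ (B.filter (fun u => G.Adj b u))) (t := FB)
    have hCpos : 0 < C.card := by
      have : (1 : ℝ) ≤ (C.card : ℝ) := by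
        push_cast at hBcard ⊢
        have := (Nat.cast_le (α := ℝ)).2 hu
        have := (Nat.cast_le (α := ℝ)).2 hsd
        have hc := congrArg (fun x : ℕ => (x : ℝ)) hie
        push_cast at *
        linarith
      exact_mod_cast lt_of_lt_of_le zero_lt_one (by exact_mod_cast this)
    obtain ⟨v, hv⟩ := card_pos.mp hCpos
    rw [hC, mem_sdiff, mem_inter, mem_filter, mem_filter] at hv
    obtain ⟨⟨⟨hvB, hav⟩, ⟨_, hbv⟩⟩, hvFB⟩ := hv
    refine ⟨Walk.cons hav (Walk.cons hbv.symm Walk.nil), ?_, by simp, ?_⟩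
    · rw [Walk.isPath_def]
      simp only [Walk.support_cons, Walk.support_nil, List.nodup_cons, List.mem_cons,
        List.mem_singleton, List.not_mem_nil, not_false_iff, and_true, List.nodup_nil]
      have h1 : a ≠ v := hav.ne
      have h2 : v ≠ b := hbv.symm.ne
      simp_all
    · intro x hx
      simp only [Walk.support_cons, Walk.support_nil, List.mem_cons, List.mem_singleton,
        List.not_mem_nil, or_false] at hx
      rcases hx with rfl | rfl | rfl
      · exact Or.inl ⟨ha, haFA⟩
      · exact Or.inr ⟨hvB, hvFB⟩
      · exact Or.inl ⟨hb, hbFA⟩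
  | succ k hk ih =>
    intro FA FB a b ha hb hab haFA hbFA hBcard hAcard
    -- pick v ∈ B adjacent to a, outside FB
    have hv1 := hA a ha
    have hsd1 := card_le_card_sdiff_add_card (s := B.filter (fun u => G.Adj a u)) (t := FB)
    have hC1pos : 0 < ((B.filter (fun u => G.Adj a u)) \ FB).card := by
      have : (1 : ℝ) ≤ (((B.filter (fun u => G.Adj a u)) \ FB).card : ℝ) := by
        have := (Nat.cast_le (α := ℝ)).2 hsd1
        push_cast at *
        linarith
      exact_mod_cast lt_of_lt_of_le zero_lt_one (by exact_mod_cast this)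
    obtain ⟨v, hv⟩ := card_pos.mp hC1pos
    rw [mem_sdiff, mem_filter] at hv
    obtain ⟨⟨hvB, hav⟩, hvFB⟩ := hv
    -- pick a' ∈ A adjacent to v, outside insert a (insert b FA)
    have hv2 := hB v hvB
    have hsd2 := card_le_card_sdiff_add_card (s := A.filter (fun u => G.Adj v u))
      (t := insert a (insert b FA))
    have hins : (insert a (insert b FA)).card ≤ FA.card + 2 := by
      calc (insert a (insert b FA)).card ≤ (insert b FA).card + 1 := card_insert_le _ _
        _ ≤ FA.card + 2 := by have := card_insert_le b FA; omega
    have hC2pos : 0 < ((A.filter (fun u => G.Adj v u)) \ (insert a (insert b FA))).card := by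
      have : (1 : ℝ) ≤ (((A.filter (fun u => G.Adj v u)) \ (insert a (insert b FA))).card : ℝ) := by
        have h3 := (Nat.cast_le (α := ℝ)).2 hsd2
        have h4 := (Nat.cast_le (α := ℝ)).2 hins
        push_cast at *
        linarith
      exact_mod_cast lt_of_lt_of_le zero_lt_one (by exact_mod_cast this)
    obtain ⟨a', ha'⟩ := card_pos.mp hC2pos
    rw [mem_sdiff, mem_filter] at ha'
    obtain ⟨⟨ha'A, hva'⟩, ha'ni⟩ := ha'
    simp only [mem_insert, not_or] at ha'ni
    obtain ⟨ha'a, ha'b, ha'FA⟩ := ha'ni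
    -- recursive path
    have hinsA : (insert a FA).card ≤ FA.card + 1 := card_insert_le _ _
    have hinsB : (insert v FB).card ≤ FB.card + 1 := card_insert_le _ _
    obtain ⟨p', hp'path, hp'len, hp'supp⟩ := ih (insert a FA) (insert v FB) a' b ha'A hb ha'b
      (by simp [ha'a, ha'FA])
      (by simp only [mem_insert, not_or]; exact ⟨fun h => hab (h.symm), hbFA⟩)
      (by have := (Nat.cast_le (α := ℝ)).2 hinsB; push_cast at *; linarith)
      (by have := (Nat.cast_le (α := ℝ)).2 hinsA; push_cast at *; linarith)
    have hdisj := Finset.disjoint_left.mp hAB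
    have hvns : v ∉ p'.support := by
      intro h
      rcases hp'supp v h with ⟨hvA, _⟩ | ⟨_, hni⟩
      · exact hdisj hvA hvB
      · exact hni (mem_insert_self v FB)
    have hans : a ∉ p'.support := by
      intro h
      rcases hp'supp a h with ⟨_, hni⟩ | ⟨haB, _⟩
      · exact hni (mem_insert_self a FA)
      · exact hdisj ha haB
    refine ⟨Walk.cons hav (Walk.cons hva' p'), ?_, ?_, ?_⟩
    · rw [Walk.cons_isPath_iff, Walk.cons_isPath_iff]
      refine ⟨⟨hp'path, hvns⟩, ?_⟩
      simp only [Walk.support_cons, List.mem_cons, not_or]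
      exact ⟨fun h => hdisj ha (h ▸ hvB), hans⟩
    · simp only [Walk.length_cons, hp'len]; ring
    · intro x hx
      simp only [Walk.support_cons, List.mem_cons] at hx
      rcases hx with rfl | rfl | hx
      · exact Or.inl ⟨ha, haFA⟩
      · exact Or.inr ⟨hvB, hvFB⟩
      · rcases hp'supp x hx with ⟨hxA, hni⟩ | ⟨hxB, hni⟩
        · exact Or.inl ⟨hxA, fun h => hni (mem_insert_of_mem h)⟩
        · exact Or.inr ⟨hxB, fun h => hni (mem_insert_of_mem h)⟩

/-- Two vertex-disjoint blue edges between `X₁` and `Y₁`, together with blue almost-complete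
bipartite graphs `G₂[X₁,X₂]` and `G₂[Y₁,Y₂]`, yield a blue cycle on exactly `⟪α₂ n⟫`
vertices. -/
theorem blue_cycle_from_two_edges (α₁ α₂ η : ℝ) (hα₂ : 0 < α₂) (h₂₁ : α₂ ≤ α₁) (hη0 : 0 < η)
    (hη : η ≤ min ((α₁ / 100) ^ (64 : ℕ)) ((α₂ / 100) ^ (64 : ℕ))) :
    ∃ n₀ : ℕ, ∀ n : ℕ, n₀ < n →
      ∀ (V : Type) [Fintype V], ∀ (χ : Sym2 V → Fin 3) (X₁ X₂ Y₁ Y₂ : Finset V),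
        Disjoint X₁ X₂ → Disjoint X₁ Y₁ → Disjoint X₁ Y₂ →
        Disjoint X₂ Y₁ → Disjoint X₂ Y₂ → Disjoint Y₁ Y₂ →
        (α₁ - 11 * η ^ ((1 : ℝ) / 64)) * n ≤ (X₁.card : ℝ) →
        (α₁ - 11 * η ^ ((1 : ℝ) / 64)) * n ≤ (Y₁.card : ℝ) →
        (α₂ / 2 - 6 * η ^ ((1 : ℝ) / 64)) * n ≤ (X₂.card : ℝ) →
        (α₂ / 2 - 6 * η ^ ((1 : ℝ) / 64)) * n ≤ (Y₂.card : ℝ) →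
        (∀ v ∈ X₁, (X₂.card : ℝ) - 4 * η ^ ((1 : ℝ) / 64) * n ≤
          (degIn (colourGraph χ 1) X₂ v : ℝ)) →
        (∀ v ∈ X₂, (X₁.card : ℝ) - 4 * η ^ ((1 : ℝ) / 64) * n ≤
          (degIn (colourGraph χ 1) X₁ v : ℝ)) →
        (∀ v ∈ Y₁, (Y₂.card : ℝ) - 4 * η ^ ((1 : ℝ) / 64) * n ≤
          (degIn (colourGraph χ 1) Y₂ v : ℝ)) →
        (∀ v ∈ Y₂, (Y₁.card : ℝ) - 4 * η ^ ((1 : ℝ) / 64) * n ≤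
          (degIn (colourGraph χ 1) Y₁ v : ℝ)) →
        ∀ x₁ x₂ y₁ y₂ : V, x₁ ∈ X₁ → x₂ ∈ X₁ → x₁ ≠ x₂ → y₁ ∈ Y₁ → y₂ ∈ Y₁ → y₁ ≠ y₂ →
          χ s(x₁, y₁) = 1 → χ s(x₂, y₂) = 1 →
          HasCycleLen (colourGraph χ 1) (evenFloor (α₂ * n)).toNat := by
  have hα₁ : 0 < α₁ := lt_of_lt_of_le hα₂ h₂₁
  have hpow : ∀ x : ℝ, 0 ≤ x → ((x ^ (64 : ℕ)) : ℝ) ^ ((1 : ℝ) / 64) = x := by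
    intro x hx
    rw [← Real.rpow_natCast x 64, ← Real.rpow_mul hx]
    norm_num
  have hβ2 : η ^ ((1 : ℝ) / 64) ≤ α₂ / 100 := by
    have h := le_trans hη (min_le_right _ _)
    have h2 := Real.rpow_le_rpow (le_of_lt hη0) h (by norm_num : (0:ℝ) ≤ 1 / 64)
    rwa [hpow _ (by positivity)] at h2
  have hβ1 : η ^ ((1 : ℝ) / 64) ≤ α₁ / 100 := by
    have h := le_trans hη (min_le_left _ _)
    have h2 := Real.rpow_le_rpow (le_of_lt hη0) h (by norm_num : (0:ℝ) ≤ 1 / 64)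
    rwa [hpow _ (by positivity)] at h2
  have hβ0 : (0:ℝ) ≤ η ^ ((1 : ℝ) / 64) := le_of_lt (Real.rpow_pos_of_pos hη0 _)
  refine ⟨⌈100 / α₂⌉₊, ?_⟩
  intro n hn V _ χ X₁ X₂ Y₁ Y₂ dX12 dX1Y1 dX1Y2 dX2Y1 dX2Y2 dY12 hX1 hY1 hX2 hY2
    degX1 degX2 degY1 degY2 x₁ x₂ y₁ y₂ hx₁ hx₂ hx12 hy₁ hy₂ hy12 hc1 hc2
  classical
  letI : DecidableEq V := Classical.decEq V
  set G := colourGraph χ 1 with hGdef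
  letI : DecidableRel G.Adj := Classical.decRel _
  have hn0 : (0:ℝ) ≤ (n:ℝ) := Nat.cast_nonneg n
  have h100 : (100:ℝ) ≤ α₂ * n := by
    have h1 : (100 / α₂ : ℝ) ≤ (⌈100 / α₂⌉₊ : ℕ) := Nat.le_ceil _
    have h2 : ((⌈100 / α₂⌉₊ : ℕ) : ℝ) ≤ (n:ℝ) := Nat.cast_le.2 (le_of_lt hn)
    have h3 := (div_le_iff₀ hα₂).1 (h1.trans h2)
    linarith
  have hbn2 : η ^ ((1 : ℝ) / 64) * n ≤ α₂ / 100 * n := mul_le_mul_of_nonneg_right hβ2 hn0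
  have hbn1 : η ^ ((1 : ℝ) / 64) * n ≤ α₁ / 100 * n := mul_le_mul_of_nonneg_right hβ1 hn0
  have hbn0 : (0:ℝ) ≤ η ^ ((1 : ℝ) / 64) * n := mul_nonneg hβ0 hn0
  have hαn : α₂ * n ≤ α₁ * n := mul_le_mul_of_nonneg_right h₂₁ hn0
  -- the target length m
  set m : ℕ := (evenFloor (α₂ * (n:ℝ))).toNat with hmdef
  have hev : evenFloor (α₂ * (n:ℝ)) = 2 * ⌊α₂ * (n:ℝ) / 2⌋ := rfl
  set q : ℤ := ⌊α₂ * (n:ℝ) / 2⌋ with hqdef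
  have hq0 : (0:ℤ) ≤ q := Int.le_floor.2 (by push_cast; linarith)
  have hqle : (q:ℝ) ≤ α₂ * n / 2 := Int.floor_le _
  have hqge : α₂ * n / 2 - 1 < (q:ℝ) := Int.sub_one_lt_floor _
  have hmq : (m:ℤ) = 2 * q := by
    rw [hmdef, hev]
    exact Int.toNat_of_nonneg (by linarith)
  have hmr : (m:ℝ) = 2 * (q:ℝ) := by exact_mod_cast congrArg (fun z : ℤ => (z:ℝ)) hmq
  have hmle : (m:ℝ) ≤ α₂ * n := by rw [hmr]; linarith
  have hmge : α₂ * n - 2 ≤ (m:ℝ) := by rw [hmr]; linarith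
  have hm98 : 98 ≤ m := by
    have h : (98:ℝ) ≤ (m:ℝ) := by linarith
    exact_mod_cast h
  have hmQ : m = 2 * q.toNat := by omega
  set t : ℕ := q.toNat - 1 with htdef
  have h2t : 2 * t + 2 = m := by omega
  set kX : ℕ := (t + 1) / 2 with hkXdef
  set kY : ℕ := t / 2 with hkYdef
  have hkXY : kX + kY = t := by omega
  have hkX1 : 1 ≤ kX := by omega
  have hkY1 : 1 ≤ kY := by omega
  have hkXr : (kX:ℝ) ≤ α₂ * n / 4 := by
    have h1 : 4 * kX ≤ m := by omega
    have h2 : (4:ℝ) * (kX:ℝ) ≤ (m:ℝ) := by exact_mod_cast h1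
    linarith
  have hkYr : (kY:ℝ) ≤ α₂ * n / 4 := by
    have h1 : 4 * kY ≤ m := by omega
    have h2 : (4:ℝ) * (kY:ℝ) ≤ (m:ℝ) := by exact_mod_cast h1
    linarith
  -- degree conversions
  have degX1' : ∀ v ∈ X₁, (X₂.card : ℝ) - 4 * η ^ ((1 : ℝ) / 64) * n ≤
      ((X₂.filter (fun u => G.Adj v u)).card : ℝ) := by
    intro v hv
    have h := degX1 v hv
    rwa [degIn_eq'] at h
  have degX2' : ∀ v ∈ X₂, (X₁.card : ℝ) - 4 * η ^ ((1 : ℝ) / 64) * n ≤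
      ((X₁.filter (fun u => G.Adj v u)).card : ℝ) := by
    intro v hv
    have h := degX2 v hv
    rwa [degIn_eq'] at h
  have degY1' : ∀ v ∈ Y₁, (Y₂.card : ℝ) - 4 * η ^ ((1 : ℝ) / 64) * n ≤
      ((Y₂.filter (fun u => G.Adj v u)).card : ℝ) := by
    intro v hv
    have h := degY1 v hv
    rwa [degIn_eq'] at h
  have degY2' : ∀ v ∈ Y₂, (Y₁.card : ℝ) - 4 * η ^ ((1 : ℝ) / 64) * n ≤
      ((Y₁.filter (fun u => G.Adj v u)).card : ℝ) := by
    intro v hv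
    have h := degY2 v hv
    rwa [degIn_eq'] at h
  -- build the X-side path from x₂ to x₁
  obtain ⟨pX, hpXpath, hpXlen, hpXsupp⟩ :=
    path_lemma G X₁ X₂ dX12 (4 * η ^ ((1 : ℝ) / 64) * n) (by positivity) degX1' degX2'
      kX hkX1 ∅ ∅ x₂ x₁ hx₂ hx₁ hx12.symm (notMem_empty _) (notMem_empty _)
      (by simp only [card_empty, Nat.cast_zero]; linarith)
      (by simp only [card_empty, Nat.cast_zero]; linarith)
  -- build the Y-side path from y₁ to y₂
  obtain ⟨pY, hpYpath, hpYlen, hpYsupp⟩ :=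
    path_lemma G Y₁ Y₂ dY12 (4 * η ^ ((1 : ℝ) / 64) * n) (by positivity) degY1' degY2'
      kY hkY1 ∅ ∅ y₁ y₂ hy₁ hy₂ hy12 (notMem_empty _) (notMem_empty _)
      (by simp only [card_empty, Nat.cast_zero]; linarith)
      (by simp only [card_empty, Nat.cast_zero]; linarith)
  have hpXs : ∀ x ∈ pX.support, x ∈ X₁ ∨ x ∈ X₂ := by
    intro x hx
    rcases hpXsupp x hx with ⟨h, _⟩ | ⟨h, _⟩
    · exact Or.inl h
    · exact Or.inr h
  have hpYs : ∀ x ∈ pY.support, x ∈ Y₁ ∨ x ∈ Y₂ := by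
    intro x hx
    rcases hpYsupp x hx with ⟨h, _⟩ | ⟨h, _⟩
    · exact Or.inl h
    · exact Or.inr h
  have hside : ∀ z : V, (z ∈ X₁ ∨ z ∈ X₂) → (z ∈ Y₁ ∨ z ∈ Y₂) → False := by
    intro z hzx hzy
    rcases hzx with h | h <;> rcases hzy with h' | h'
    · exact disjoint_left.mp dX1Y1 h h'
    · exact disjoint_left.mp dX1Y2 h h'
    · exact disjoint_left.mp dX2Y1 h h'
    · exact disjoint_left.mp dX2Y2 h h'
  have hx₁y₁ : G.Adj x₁ y₁ := by
    refine (⟨?_, hc1⟩ : x₁ ≠ y₁ ∧ χ s(x₁, y₁) = 1)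
    intro h
    exact hside x₁ (Or.inl hx₁) (Or.inl (by rw [h]; exact hy₁))
  have hy₂x₂ : G.Adj y₂ x₂ := by
    refine (⟨?_, ?_⟩ : y₂ ≠ x₂ ∧ χ s(y₂, x₂) = 1)
    · intro h
      exact hside x₂ (Or.inl hx₂) (Or.inl (by rw [← h]; exact hy₂))
    · rw [Sym2.eq_swap]; exact hc2
  set P : G.Walk y₁ x₁ := pY.append (Walk.cons hy₂x₂ pX) with hPdef
  have hPpath : P.IsPath := by
    rw [Walk.isPath_def, hPdef, Walk.support_append]
    have htail : (Walk.cons hy₂x₂ pX).support.tail = pX.support := by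
      simp [Walk.support_cons]
    rw [htail, List.nodup_append]
    refine ⟨hpYpath.support_nodup, hpXpath.support_nodup, ?_⟩
    intro z hz z' hz' hzz'
    exact hside z (hpXs z (by rw [hzz']; exact hz')) (hpYs z hz)
  have hedge : s(x₁, y₁) ∉ P.edges := by
    intro hmem
    rw [hPdef, Walk.edges_append, List.mem_append, Walk.edges_cons, List.mem_cons] at hmem
    rcases hmem with h | h | h
    · exact hside x₁ (Or.inl hx₁) (hpYs x₁ (Walk.fst_mem_support_of_mem_edges pY h))
    · rw [Sym2.eq_iff] at h
      rcases h with ⟨h1, h2⟩ | ⟨h1, h2⟩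
      · exact hside x₁ (Or.inl hx₁) (Or.inl (by rw [h1]; exact hy₂))
      · exact hx12 h1
    · exact hside y₁ (hpXs y₁ (Walk.snd_mem_support_of_mem_edges pX h)) (Or.inl hy₁)
  refine ⟨x₁, Walk.cons hx₁y₁ P, ?_, ?_⟩
  · exact (Walk.cons_isCycle_iff P hx₁y₁).2 ⟨hPpath, hedge⟩
  · simp only [Walk.length_cons, hPdef, Walk.length_append, Walk.length_cons, hpXlen, hpYlen]
    omega
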